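/- arXiv:1012.2274 — 9 statements merged into one kernel-verified Lean document; each statement's English description precedes it below -/
import Mathlib

section
/- Let G be a multiplicative abelian group and φ an antisymmetric tricharacter on G. Then for all ω, ξ, η, ζ ∈ G one has φ(ωξ, η, ζ) · φ(ω, η, ζ)⁻¹ · φ(ξ, ω⁻¹η, ω⁻¹ζ)⁻¹ = φ(ξ, ω, ζ) · φ(ξ, η, ω), and moreover this common value equals φ(ω, ξ, η) · φ(ω, ξ, ζ)⁻¹. (Equivalently: the maps γ_ξ on twisted kernels satisfy γ_ω ∘ γ_ξ = ad(u(ω,ξ)) ∘ γ_{ωξ}, where u(ω,ξ) is pointwise multiplication by φ(ω,ξ,·).) -/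
/-- An antisymmetric tricharacter on a multiplicative abelian group `G`: a map
`φ : G → G → G → ℂˣ` multiplicative in each variable, trivial when two arguments
coincide, and inverted under swapping any two arguments. -/
structure IsAntisymTrichar {G : Type*} [CommGroup G] (φ : G → G → G → ℂˣ) : Prop where
  mul_left : ∀ x x' y z, φ (x * x') y z = φ x y z * φ x' y z
  mul_mid : ∀ x y y' z, φ x (y * y') z = φ x y z * φ x y' z
  mul_right : ∀ x y z z', φ x y (z * z') = φ x y z * φ x y z'
  diag₁₂ : ∀ x z, φ x x z = 1
  diag₁₃ : ∀ x y, φ x y x = 1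
  diag₂₃ : ∀ x y, φ x y y = 1
  swap₁₂ : ∀ x y z, φ y x z = (φ x y z)⁻¹
  swap₂₃ : ∀ x y z, φ x z y = (φ x y z)⁻¹
  swap₁₃ : ∀ x y z, φ z y x = (φ x y z)⁻¹

/-- The twisted-kernel maps `γ_ξ` compose via the multiplier `u(ω,ξ) = φ(ω,ξ,·)`:
the cocycle `φ(ωξ,η,ζ) φ(ω,η,ζ)⁻¹ φ(ξ,ω⁻¹η,ω⁻¹ζ)⁻¹` equals `φ(ξ,ω,ζ) φ(ξ,η,ω)`,
which in turn equals `φ(ω,ξ,η) φ(ω,ξ,ζ)⁻¹`. -/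
theorem gamma_composition_cocycle {G : Type*} [CommGroup G] (φ : G → G → G → ℂˣ)
    (hφ : IsAntisymTrichar φ) :
    ∀ ω ξ η ζ : G,
      φ (ω * ξ) η ζ * (φ ω η ζ)⁻¹ * (φ ξ (ω⁻¹ * η) (ω⁻¹ * ζ))⁻¹ = φ ξ ω ζ * φ ξ η ω ∧
      φ ξ ω ζ * φ ξ η ω = φ ω ξ η * (φ ω ξ ζ)⁻¹ := by
  have one_mid : ∀ x z, φ x 1 z = 1 := by
    intro x z
    have h := hφ.mul_mid x 1 1 z
    simpa using h.symm
  have one_right : ∀ x y, φ x y 1 = 1 := by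
    intro x y
    have h := hφ.mul_right x y 1 1
    simpa using h.symm
  have inv_mid : ∀ x y z, φ x y⁻¹ z = (φ x y z)⁻¹ := by
    intro x y z
    have h := hφ.mul_mid x y y⁻¹ z
    rw [mul_inv_cancel, one_mid] at h
    exact (eq_inv_of_mul_eq_one_right h.symm)
  have inv_right : ∀ x y z, φ x y z⁻¹ = (φ x y z)⁻¹ := by
    intro x y z
    have h := hφ.mul_right x y z z⁻¹
    rw [mul_inv_cancel, one_right] at h
    exact (eq_inv_of_mul_eq_one_right h.symm)
  intro ω ξ η ζ
  have key : φ ξ (ω⁻¹ * η) (ω⁻¹ * ζ) = (φ ξ ω ζ)⁻¹ * (φ ξ η ω)⁻¹ * φ ξ η ζ := by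
    rw [hφ.mul_mid, hφ.mul_right, hφ.mul_right, hφ.diag₂₃, inv_mid, inv_right]
    group
  constructor
  · rw [hφ.mul_left, key, Units.ext_iff]
    simp only [Units.val_mul, Units.val_inv_eq_inv_val]
    field_simp
    try ring
  · rw [hφ.swap₁₂ ω ξ ζ, hφ.swap₁₃ ω η ξ, hφ.swap₂₃ ω ξ η, Units.ext_iff]
    simp only [Units.val_mul, Units.val_inv_eq_inv_val, inv_inv]
    ring
end

section
/- Let G be a multiplicative abelian group and φ an antisymmetric tricharacter on G. Then for all ξ, η, ζ, χ ∈ G one has φ(ξ, η, χ) · φ(ξη, ζ, χ) · φ(ξ, ηζ, χ)⁻¹ · φ(η, ζ, ξ⁻¹χ)⁻¹ = φ(η, ζ, ξ). (This computes the associativity cocycle u(ξ,η)u(ξη,ζ)u(ξ,ηζ)⁻¹γ_ξ[u(η,ζ)]⁻¹ of the multiplier u(ξ,η) = φ(ξ,η,·): it equals the constant φ(η,ζ,ξ).) -/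
/-- The associativity cocycle `u(ξ,η)u(ξη,ζ)u(ξ,ηζ)⁻¹ γ_ξ[u(η,ζ)]⁻¹` of the multiplier
`u(ξ,η) = φ(ξ,η,·)`, evaluated at `χ`, equals the constant `φ(η,ζ,ξ)`. -/
theorem multiplier_associativity_cocycle {G : Type*} [CommGroup G] (φ : G → G → G → ℂˣ)
    (hφ : IsAntisymTrichar φ) :
    ∀ ξ η ζ χ : G,
      φ ξ η χ * φ (ξ * η) ζ χ * (φ ξ (η * ζ) χ)⁻¹ * (φ η ζ (ξ⁻¹ * χ))⁻¹ = φ η ζ ξ := by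
  intro ξ η ζ χ
  have h1 : ∀ x y : G, φ x y 1 = 1 := by
    intro x y
    have := hφ.mul_right x y 1 1
    rw [one_mul] at this
    exact (mul_eq_left.mp this.symm)
  have hinv : ∀ x y z : G, φ x y z⁻¹ = (φ x y z)⁻¹ := by
    intro x y z
    have := hφ.mul_right x y z z⁻¹
    rw [mul_inv_cancel, h1] at this
    exact eq_inv_of_mul_eq_one_right this.symm
  rw [hφ.mul_left, hφ.mul_mid, hφ.mul_right, hinv, mul_inv, mul_inv, inv_inv]
  generalize φ ξ η χ = a
  generalize φ ξ ζ χ = b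
  generalize φ η ζ χ = c
  generalize φ η ζ ξ = d
  have : a * (b * c) * (a⁻¹ * b⁻¹) * (d * c⁻¹)
      = d * ((a * a⁻¹) * ((b * b⁻¹) * (c * c⁻¹))) := by
    ac_rfl
  rw [this]
  simp
end

section
/- Let G be a finite multiplicative abelian group and φ an antisymmetric tricharacter on G. For kernels K, L : G × G → ℂ define the φ-twisted kernel product (K ⋆ L)(η,ζ) = Σ_{y∈G} φ(η,y,ζ) K(η,y) L(y,ζ), and for ξ ∈ G define (γ_ξ K)(η,ζ) = φ(ξ,η,ζ)⁻¹ K(ξ⁻¹η, ξ⁻¹ζ). Then each γ_ξ is multiplicative for the twisted product: γ_ξ(K ⋆ L) = (γ_ξ K) ⋆ (γ_ξ L) for all K, L. -/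
section Aux

variable {G : Type*} [CommGroup G]

namespace IsAntisymTrichar

variable {φ : G → G → G → ℂˣ}

lemma one_left (h : IsAntisymTrichar φ) (y z : G) : φ 1 y z = 1 := by
  have := h.mul_left 1 1 y z
  simpa using this.symm

lemma inv_left (h : IsAntisymTrichar φ) (x y z : G) : φ x⁻¹ y z = (φ x y z)⁻¹ := by
  have := h.mul_left x x⁻¹ y z
  rw [mul_inv_cancel, h.one_left] at this
  exact eq_inv_of_mul_eq_one_right this.symm

lemma one_mid (h : IsAntisymTrichar φ) (x z : G) : φ x 1 z = 1 := by
  have := h.mul_mid x 1 1 z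
  simpa using this.symm

lemma inv_mid (h : IsAntisymTrichar φ) (x y z : G) : φ x y⁻¹ z = (φ x y z)⁻¹ := by
  have := h.mul_mid x y y⁻¹ z
  rw [mul_inv_cancel, h.one_mid] at this
  exact eq_inv_of_mul_eq_one_right this.symm

lemma one_right (h : IsAntisymTrichar φ) (x y : G) : φ x y 1 = 1 := by
  have := h.mul_right x y 1 1
  simpa using this.symm

lemma inv_right (h : IsAntisymTrichar φ) (x y z : G) : φ x y z⁻¹ = (φ x y z)⁻¹ := by
  have := h.mul_right x y z z⁻¹
  rw [mul_inv_cancel, h.one_right] at this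
  exact eq_inv_of_mul_eq_one_right this.symm

/-- The key cocycle-type identity. -/
lemma key (h : IsAntisymTrichar φ) (ξ η y ζ : G) :
    (φ ξ η ζ)⁻¹ * φ (ξ⁻¹ * η) (ξ⁻¹ * y) (ξ⁻¹ * ζ)
      = φ η y ζ * (φ ξ η y)⁻¹ * (φ ξ y ζ)⁻¹ := by
  have e1 : φ (ξ⁻¹ * η) (ξ⁻¹ * y) (ξ⁻¹ * ζ)
      = (φ ξ y ζ)⁻¹ * ((φ η ξ ζ)⁻¹ * ((φ η y ξ)⁻¹ * φ η y ζ)) := by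
    simp only [h.mul_left, h.mul_mid, h.mul_right, h.inv_left, h.inv_mid,
      h.inv_right, h.diag₁₂, h.diag₁₃, h.diag₂₃, inv_one, one_mul, mul_one]
  rw [e1, h.swap₁₂ ξ η ζ]
  rw [show φ η y ξ = φ ξ η y from by rw [h.swap₁₃ ξ y η, h.swap₂₃ ξ η y, inv_inv]]
  simp only [inv_inv, mul_assoc]
  rw [mul_left_comm ((φ ξ y ζ)⁻¹) (φ ξ η ζ), inv_mul_cancel_left]
  simp [mul_comm, mul_left_comm, mul_assoc]

end IsAntisymTrichar

end Aux

variable {G : Type*} [CommGroup G] [Fintype G]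

/-- The `φ`-twisted kernel product `(K ⋆ L)(η,ζ) = Σ_y φ(η,y,ζ) K(η,y) L(y,ζ)`. -/
noncomputable def twistedKernelMul (φ : G → G → G → ℂˣ) (K L : G → G → ℂ) : G → G → ℂ :=
  fun η ζ => ∑ y : G, (φ η y ζ : ℂ) * K η y * L y ζ

/-- The twisted translation `(γ_ξ K)(η,ζ) = φ(ξ,η,ζ)⁻¹ K(ξ⁻¹η, ξ⁻¹ζ)`. -/
noncomputable def twistedGamma (φ : G → G → G → ℂˣ) (ξ : G) (K : G → G → ℂ) : G → G → ℂ :=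
  fun η ζ => ((φ ξ η ζ : ℂ))⁻¹ * K (ξ⁻¹ * η) (ξ⁻¹ * ζ)

/-- Each `γ_ξ` is multiplicative for the `φ`-twisted kernel product:
`γ_ξ(K ⋆ L) = (γ_ξ K) ⋆ (γ_ξ L)`. -/
theorem twistedGamma_mul (φ : G → G → G → ℂˣ) (hφ : IsAntisymTrichar φ)
    (ξ : G) (K L : G → G → ℂ) :
    twistedGamma φ ξ (twistedKernelMul φ K L)
      = twistedKernelMul φ (twistedGamma φ ξ K) (twistedGamma φ ξ L) := by
  funext η ζ
  simp only [twistedGamma, twistedKernelMul, Finset.mul_sum]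
  refine Fintype.sum_equiv (Equiv.mulLeft ξ) _ _ fun y => ?_
  simp only [Equiv.coe_mulLeft, inv_mul_cancel_left]
  have hk := hφ.key ξ η (ξ * y) ζ
  rw [inv_mul_cancel_left] at hk
  have hk' : ((φ ξ η ζ : ℂ))⁻¹ * (φ (ξ⁻¹ * η) y (ξ⁻¹ * ζ) : ℂ)
      = (φ η (ξ * y) ζ : ℂ) * ((φ ξ η (ξ * y) : ℂ))⁻¹ * ((φ ξ (ξ * y) ζ : ℂ))⁻¹ := by
    have := congrArg (Units.val) hk
    push_cast at this
    simpa using this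
  calc ((φ ξ η ζ : ℂ))⁻¹ * ((φ (ξ⁻¹ * η) y (ξ⁻¹ * ζ) : ℂ)
          * K (ξ⁻¹ * η) y * L y (ξ⁻¹ * ζ))
      = (((φ ξ η ζ : ℂ))⁻¹ * (φ (ξ⁻¹ * η) y (ξ⁻¹ * ζ) : ℂ))
          * K (ξ⁻¹ * η) y * L y (ξ⁻¹ * ζ) := by ring
    _ = ((φ η (ξ * y) ζ : ℂ) * ((φ ξ η (ξ * y) : ℂ))⁻¹ * ((φ ξ (ξ * y) ζ : ℂ))⁻¹)
          * K (ξ⁻¹ * η) y * L y (ξ⁻¹ * ζ) := by rw [hk']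
    _ = (φ η (ξ * y) ζ : ℂ) * (((φ ξ η (ξ * y) : ℂ))⁻¹ * K (ξ⁻¹ * η) y)
          * (((φ ξ (ξ * y) ζ : ℂ))⁻¹ * L y (ξ⁻¹ * ζ)) := by ring
end

section
/- Let G be a finite additive abelian group with dual group Ĝ = Hom(G, ℂˣ), let A be an associative ℂ-algebra, and let α : Ĝ → Aut_ℂ(A) be a group homomorphism to ℂ-algebra automorphisms. For a : G → A define â : Ĝ → A by â(ξ) = Σ_{x∈G} ξ(x) a(x), and on functions F, H : Ĝ → A define the crossed-product convolution (F ⋆ H)(ξ) = Σ_{η∈Ĝ} F(η) · α_η(H(ξ·η⁻¹)). For f : G → ℂ and b ∈ A define the module action f ▸ b = Σ_{z∈G} Σ_{η∈Ĝ} f(z) η(z) α_η(b). Then for all a, b : G → A, the product transported back to G-functions is pointwise: (â ⋆ b̂)(ξ) = Σ_{x∈G} ξ(x) (a_x ▸ b(x)) for all ξ ∈ Ĝ, where a_x(z) = a(z + x). -/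
variable {G : Type*} [AddCommGroup G] [Fintype G] [Fintype (AddChar G ℂˣ)]
  {A : Type*} [Ring A] [Algebra ℂ A]

/-- The Fourier transform `â(ξ) = Σ_{x∈G} ξ(x) a(x)` of an `A`-valued function on `G`. -/
noncomputable def fourierTransform (a : G → A) : AddChar G ℂˣ → A :=
  fun ξ => ∑ x : G, ((ξ x : ℂˣ) : ℂ) • a x

/-- The crossed-product convolution `(F ⋆ H)(ξ) = Σ_η F(η) · α_η(H(ξη⁻¹))` on
`A`-valued functions on the dual group `Ĝ`. -/
noncomputable def crossedMul (α : AddChar G ℂˣ →* (A ≃ₐ[ℂ] A))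
    (F H : AddChar G ℂˣ → A) : AddChar G ℂˣ → A :=
  fun ξ => ∑ η : AddChar G ℂˣ, F η * α η (H (ξ * η⁻¹))

/-- The module action of an `A ⊗ C(G)`-element `g : G → A` on `b ∈ A`, combining the
multiplication in `A` with the `C(G)`-action `f ▸ b = Σ_z Σ_η f(z) η(z) α_η(b)`. -/
noncomputable def moduleAct (α : AddChar G ℂˣ →* (A ≃ₐ[ℂ] A)) (g : G → A) (b : A) : A :=
  ∑ z : G, ∑ η : AddChar G ℂˣ, g z * (((η z : ℂˣ) : ℂ) • α η b)

/-- In the Fourier picture the crossed-product multiplication is pointwise: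
`(â ⋆ b̂)(ξ) = Σ_x ξ(x) (a_x ▸ b(x))`, where `a_x(z) = a(z + x)`. -/
theorem crossedMul_fourier_pointwise (α : AddChar G ℂˣ →* (A ≃ₐ[ℂ] A))
    (a b : G → A) (ξ : AddChar G ℂˣ) :
    crossedMul α (fourierTransform a) (fourierTransform b) ξ
      = ∑ x : G, ((ξ x : ℂˣ) : ℂ) • moduleAct α (fun z => a (z + x)) (b x) := by
  unfold crossedMul fourierTransform moduleAct
  simp only [map_sum, map_smul, Finset.mul_sum, Finset.sum_mul, Finset.smul_sum,
    smul_mul_assoc, mul_smul_comm, smul_smul]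
  conv_lhs => rw [Finset.sum_comm]
  refine Finset.sum_congr rfl fun x _ => ?_
  conv_rhs => rw [Finset.sum_comm]
  refine Finset.sum_congr rfl fun η _ => ?_
  refine Fintype.sum_equiv (Equiv.subRight x) _ _ fun z => ?_
  simp only [Equiv.subRight_apply, sub_eq_add_neg, neg_add_cancel_right, Pi.mul_apply,
    AddChar.inv_apply]
  congr 1
  simp only [AddChar.mul_apply, AddChar.inv_apply, AddChar.map_add_eq_mul]
  push_cast
  ring
end

section
/- Let G be a finite additive abelian group, B an associative unital ℂ-algebra, φ and ψ antisymmetric tricharacters on G, β : G → Aut_ℂ(B) a map to algebra automorphisms, and u : G × G → Bˣ such that for all x, y, z ∈ G and b ∈ B: (i) β_x(β_y(b)) = u(x,y) · β_{x+y}(b) · u(x,y)⁻¹, and (ii) φ(x,y,z) · u(x,y) · u(x+y,z) = β_x(u(y,z)) · u(x,y+z). For a, b : G × G → B define the (ψφ)-modified crossed product multiplication (a ⋆ b)(s,x) = Σ_{t∈G} ψ(t, s−t, x) φ(t, s−t, x) · a(t, s−t+x) · β_t(b(s−t, x)) · u(t, s−t), and define the transform ã(w,z) = β_w⁻¹( a(w−z,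 z) · u(w−z, z) ). Then for all a, b : G × G → B and all w, z ∈ G: (a ⋆ b)~(w,z) = Σ_{v∈G} ψ(w, v, z) · ã(w,v) · b̃(v,z); that is, the transform carries the modified crossed product multiplication to the ψ-twisted multiplication of B-valued kernels. -/
/-- An antisymmetric tricharacter on an additive abelian group `G`: a map
`φ : G → G → G → ℂˣ` multiplicative in each variable, trivial when two arguments
coincide, and inverted under swapping any two arguments. -/
structure IsAddAntisymTrichar {G : Type*} [AddCommGroup G] (φ : G → G → G → ℂˣ) : Prop where
  mul_left : ∀ x x' y z, φ (x + x') y z = φ x y z * φ x' y z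
  mul_mid : ∀ x y y' z, φ x (y + y') z = φ x y z * φ x y' z
  mul_right : ∀ x y z z', φ x y (z + z') = φ x y z * φ x y z'
  diag₁₂ : ∀ x z, φ x x z = 1
  diag₁₃ : ∀ x y, φ x y x = 1
  diag₂₃ : ∀ x y, φ x y y = 1
  swap₁₂ : ∀ x y z, φ y x z = (φ x y z)⁻¹
  swap₂₃ : ∀ x y z, φ x z y = (φ x y z)⁻¹
  swap₁₃ : ∀ x y z, φ z y x = (φ x y z)⁻¹

variable {G : Type*} [AddCommGroup G] [Fintype G] {B : Type*} [Ring B] [Algebra ℂ B]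

/-- The `(ψφ)`-modified crossed product multiplication on `B`-valued functions on `G × G`:
`(a ⋆ b)(s,x) = Σ_t ψ(t,s−t,x) φ(t,s−t,x) a(t,s−t+x) β_t(b(s−t,x)) u(t,s−t)`. -/
noncomputable def modifiedCrossedMul (ψ φ : G → G → G → ℂˣ) (β : G → (B ≃ₐ[ℂ] B))
    (u : G → G → Bˣ) (a b : G → G → B) : G → G → B :=
  fun s x => ∑ t : G, (((ψ t (s - t) x : ℂˣ) : ℂ) * ((φ t (s - t) x : ℂˣ) : ℂ)) •
    (a t (s - t + x) * β t (b (s - t) x) * (u t (s - t) : B))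

/-- The kernel transform `ã(w,z) = β_w⁻¹( a(w−z,z) u(w−z,z) )`. -/
noncomputable def kernelTransform (β : G → (B ≃ₐ[ℂ] B)) (u : G → G → Bˣ)
    (a : G → G → B) : G → G → B :=
  fun w z => (β w).symm (a (w - z) z * (u (w - z) z : B))


section Aux

lemma IsAddAntisymTrichar.zero_left {G : Type*} [AddCommGroup G] {φ : G → G → G → ℂˣ}
    (h : IsAddAntisymTrichar φ) (y z : G) : φ 0 y z = 1 := by
  have := h.mul_left 0 0 y z
  rw [add_zero] at this
  exact left_eq_mul.mp this

lemma IsAddAntisymTrichar.sub_left {G : Type*} [AddCommGroup G] {φ : G → G → G → ℂˣ}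
    (h : IsAddAntisymTrichar φ) (x x' y z : G) :
    φ (x - x') y z = φ x y z * (φ x' y z)⁻¹ := by
  have := h.mul_left (x - x') x' y z
  rw [sub_add_cancel] at this
  rw [this]; group

lemma IsAddAntisymTrichar.sub_mid {G : Type*} [AddCommGroup G] {φ : G → G → G → ℂˣ}
    (h : IsAddAntisymTrichar φ) (x y y' z : G) :
    φ x (y - y') z = φ x y z * (φ x y' z)⁻¹ := by
  have := h.mul_mid x (y - y') y' z
  rw [sub_add_cancel] at this
  rw [this]; group

lemma trichar_key {G : Type*} [AddCommGroup G] {ψ : G → G → G → ℂˣ}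
    (hψ : IsAddAntisymTrichar ψ) (w v z : G) :
    ψ (w - v) (v - z) z = ψ w v z := by
  rw [hψ.sub_left, hψ.sub_mid, hψ.sub_mid, hψ.diag₂₃, hψ.diag₂₃, hψ.diag₁₂]
  group

end Aux

/-- Generalized Takai duality (algebraic core): for a Leptin–Busby–Smith twisted action
`(β, u)` with associator `φ`, the kernel transform carries the `(ψφ)`-modified crossed
product multiplication to the `ψ`-twisted multiplication of `B`-valued kernels. -/
theorem kernelTransform_modifiedCrossedMul (ψ φ : G → G → G → ℂˣ)
    (hψ : IsAddAntisymTrichar ψ) (hφ : IsAddAntisymTrichar φ)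
    (β : G → (B ≃ₐ[ℂ] B)) (u : G → G → Bˣ)
    (hβu : ∀ (x y : G) (b : B), β x (β y b) = (u x y : B) * β (x + y) b * ((u x y)⁻¹ : Bˣ))
    (hu : ∀ x y z : G, ((φ x y z : ℂˣ) : ℂ) • ((u x y : B) * (u (x + y) z : B))
      = β x (u y z) * (u x (y + z) : B))
    (a b : G → G → B) (w z : G) :
    kernelTransform β u (modifiedCrossedMul ψ φ β u a b) w z
      = ∑ v : G, ((ψ w v z : ℂˣ) : ℂ) •
          (kernelTransform β u a w v * kernelTransform β u b v z) := by

  classical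
  simp only [kernelTransform, modifiedCrossedMul]
  rw [Finset.sum_mul, map_sum]
  refine Fintype.sum_equiv (Equiv.subLeft w) _ _ (fun t => ?_)
  -- notation
  set v : G := w - t with hvdef
  have hveq : Equiv.subLeft w t = v := rfl
  have hv : w - v = t := by rw [hvdef]; abel
  rw [hveq, hv]
  have h1 : w - z - t = v - z := by rw [hvdef]; abel
  have h2 : v - z + z = v := by abel
  rw [h1, h2]
  -- scalar identity
  have hsc : ψ t (v - z) z = ψ w v z := by
    have : t = w - v := by rw [hvdef]; abel
    rw [this, trichar_key hψ]
  -- cocycle identity specialized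
  have ht1 : t + (v - z) = w - z := by rw [hvdef]; abel
  have ht2 : (v - z) + z = v := by abel
  have hcocycle := hu t (v - z) z
  rw [ht1, ht2] at hcocycle
  -- action rearrangement: β t X * u t v = u t v * β w ((β v).symm X)
  have htv : t + v = w := by rw [hvdef]; abel
  set X : B := b (v - z) z * (u (v - z) z : B) with hX
  have hact : (β t) X * (u t v : B) = (u t v : B) * (β w) ((β v).symm X) := by
    have h := hβu t v ((β v).symm X)
    rw [(β v).apply_symm_apply, htv] at h
    rw [h, mul_assoc, mul_assoc, Units.inv_mul, mul_one]
  -- now compute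
  rw [smul_mul_assoc, map_smul, hsc, mul_smul]
  congr 1
  have key : (((φ t (v - z) z : ℂˣ) : ℂ)) •
      (a t v * (β t) (b (v - z) z) * (u t (v - z) : B) * (u (w - z) z : B))
      = a t v * (u t v : B) * (β w) ((β v).symm X) := by
    have e : a t v * (β t) (b (v - z) z) * (u t (v - z) : B) * (u (w - z) z : B)
        = a t v * (β t) (b (v - z) z) * ((u t (v - z) : B) * (u (w - z) z : B)) := by
      rw [mul_assoc (a t v * (β t) (b (v - z) z))]
    rw [e, ← mul_smul_comm, hcocycle, ← mul_assoc, mul_assoc (a t v), ← map_mul, ← hX,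
      mul_assoc, hact, ← mul_assoc]
  rw [← map_smul, key, map_mul, (β w).symm_apply_apply, hX]
end

section
/- Let G be a finite additive abelian group, B an associative unital ℂ-algebra, φ an antisymmetric tricharacter on G, β : G → Aut_ℂ(B) a map to algebra automorphisms, and u : G × G → Bˣ such that for all x, y, z ∈ G and b ∈ B: (i) β_x(β_y(b)) = u(x,y) · β_{x+y}(b) · u(x,y)⁻¹, and (ii) φ(x,y,z) · u(x,y) · u(x+y,z) = β_x(u(y,z)) · u(x,y+z). For a, b : G × G → B define (a ⋆ b)(s,x) = Σ_{t∈G} φ(t, s−t, x) · a(t, s−t+x) · β_t(b(s−t, x)) · u(t, s−t). Then the transform a ↦ ã, where ã(w,z) = β_w⁻¹( a(w−z, z) · u(w−z, z) ), is a ℂ-linear bijection from functions G × G → B to itself satisfying (a ⋆ b)~(w,z) = Σ_{v∈G} ã(w,v) · b̃(v,z); hence the φ-modified crossed product is isomorphic as a ℂ-algebra to the algebra of B-valued G × G matrices with ordinary matrix multiplication. -/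
variable {G : Type*} [AddCommGroup G] [Fintype G] {B : Type*} [Ring B] [Algebra ℂ B]

/-- The `φ`-modified crossed product multiplication on `B`-valued functions on `G × G`:
`(a ⋆ b)(s,x) = Σ_t φ(t,s−t,x) a(t,s−t+x) β_t(b(s−t,x)) u(t,s−t)`. -/
noncomputable def phiCrossedMul (φ : G → G → G → ℂˣ) (β : G → (B ≃ₐ[ℂ] B))
    (u : G → G → Bˣ) (a b : G → G → B) : G → G → B :=
  fun s x => ∑ t : G, ((φ t (s - t) x : ℂˣ) : ℂ) •
    (a t (s - t + x) * β t (b (s - t) x) * (u t (s - t) : B))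

private lemma kernel_term_eq {G : Type*} [AddCommGroup G] {B : Type*} [Ring B] [Algebra ℂ B]
    (φ : G → G → G → ℂˣ) (β : G → (B ≃ₐ[ℂ] B)) (u : G → G → Bˣ)
    (hβu : ∀ (x y : G) (b : B), β x (β y b) = (u x y : B) * β (x + y) b * ((u x y)⁻¹ : Bˣ))
    (hu : ∀ x y z : G, ((φ x y z : ℂˣ) : ℂ) • ((u x y : B) * (u (x + y) z : B))
      = β x (u y z) * (u x (y + z) : B))
    (a b : G → G → B) (w z t : G) :
    (β w).symm (((φ t (w - z - t) z : ℂˣ) : ℂ) •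
      (a t (w - z - t + z) * β t (b (w - z - t) z) * (u t (w - z - t) : B)) * (u (w - z) z : B))
    = (β w).symm (a (w - (w - t)) (w - t) * (u (w - (w - t)) (w - t) : B))
      * (β (w - t)).symm (b (w - t - z) z * (u (w - t - z) z : B)) := by
  have hvt : t + (w - t) = w := by abel
  have h1 : w - z - t = w - t - z := by abel
  have h2 : w - z - t + z = w - t := by abel
  have h3 : t + (w - t - z) = w - z := by abel
  have h4 : w - t - z + z = w - t := by abel
  have hw : ∀ c : B, (β w) c = ((u t (w - t))⁻¹ : Bˣ) * β t (β (w - t) c) * (u t (w - t) : B) := by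
    intro c
    rw [hβu t (w - t) c, hvt]
    simp [mul_assoc]
  have hR : (β w).symm (a (w - (w - t)) (w - t) * (u (w - (w - t)) (w - t) : B))
      * (β (w - t)).symm (b (w - t - z) z * (u (w - t - z) z : B))
      = (β w).symm ((a (w - (w - t)) (w - t) * (u (w - (w - t)) (w - t) : B))
        * β w ((β (w - t)).symm (b (w - t - z) z * (u (w - t - z) z : B)))) := by
    simp [map_mul, mul_assoc]
  rw [hR]
  congr 1
  rw [hw, AlgEquiv.apply_symm_apply, sub_sub_cancel, h2, h1]
  have hkey := hu t (w - t - z) z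
  rw [h3, h4] at hkey
  calc ((φ t (w - t - z) z : ℂˣ) : ℂ) •
      (a t (w - t) * β t (b (w - t - z) z) * (u t (w - t - z) : B)) * (u (w - z) z : B)
      = a t (w - t) * β t (b (w - t - z) z) *
        (((φ t (w - t - z) z : ℂˣ) : ℂ) • ((u t (w - t - z) : B) * (u (w - z) z : B))) := by
        rw [mul_smul_comm, smul_mul_assoc, mul_assoc]
    _ = a t (w - t) * β t (b (w - t - z) z) * (β t (u (w - t - z) z) * (u t (w - t) : B)) := by
        rw [hkey]
    _ = _ := by
        rw [map_mul]
        simp [mul_assoc, Units.mul_inv_cancel_left]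

/-- Strictification (the case `ψ ≡ 1` of generalized Takai duality): the kernel
transform is a ℂ-linear bijection carrying the `φ`-modified crossed product
multiplication to ordinary multiplication of `B`-valued `G × G` matrices; hence the
`φ`-modified crossed product is isomorphic to the `B`-valued matrix algebra. -/
theorem kernelTransform_phiCrossedMul_matrix (φ : G → G → G → ℂˣ)
    (hφ : IsAddAntisymTrichar φ)
    (β : G → (B ≃ₐ[ℂ] B)) (u : G → G → Bˣ)
    (hβu : ∀ (x y : G) (b : B), β x (β y b) = (u x y : B) * β (x + y) b * ((u x y)⁻¹ : Bˣ))
    (hu : ∀ x y z : G, ((φ x y z : ℂˣ) : ℂ) • ((u x y : B) * (u (x + y) z : B))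
      = β x (u y z) * (u x (y + z) : B)) :
    Function.Bijective (kernelTransform β u) ∧
    (∀ (a b : G → G → B), kernelTransform β u (a + b)
        = kernelTransform β u a + kernelTransform β u b) ∧
    (∀ (c : ℂ) (a : G → G → B), kernelTransform β u (c • a) = c • kernelTransform β u a) ∧
    (∀ (a b : G → G → B) (w z : G),
      kernelTransform β u (phiCrossedMul φ β u a b) w z
        = ∑ v : G, kernelTransform β u a w v * kernelTransform β u b v z) := by
  refine ⟨?_, ?_, ?_, ?_⟩
  · rw [Function.bijective_iff_has_inverse]
    refine ⟨fun a s x => β (s + x) (a (s + x) x) * ((u s x)⁻¹ : Bˣ), ?_, ?_⟩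
    · intro a
      funext s x
      simp [kernelTransform, mul_assoc]
    · intro a
      funext w z
      simp [kernelTransform, mul_assoc]
  · intro a b
    funext w z
    simp [kernelTransform, add_mul, map_add]
  · intro c a
    funext w z
    simp [kernelTransform, smul_mul_assoc, map_smul]
  · intro a b w z
    simp only [kernelTransform, phiCrossedMul]
    rw [Finset.sum_mul, map_sum]
    exact Fintype.sum_equiv (Equiv.subLeft w) _ _
      (fun t => kernel_term_eq φ β u hβu hu a b w z t)
end

section
/- Let G be a finite additive abelian group with dual group Ĝ = Hom(G, ℂˣ), let A be a ℂ-module, and let α : G → GL_ℂ(A) be a group homomorphism. For F : G × Ĝ → A define the transform F̃(x,z) = Σ_{ξ∈Ĝ} ξ(z) · α_x⁻¹(F(x−z, ξ)), and for v ∈ G define the double-dual action (D_v F)(x,ξ) = ξ(v) · F(x,ξ). Then for all F, v, x, z: (D_v F)~(x,z) = α_v( F̃(x+v, z+v) ). That is, under the transform, the double dual action of G combines the original action α on A with the adjoint action of the right regular representation of G on kernels. -/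
variable {G : Type*} [AddCommGroup G] [Fintype G] [Fintype (AddChar G ℂˣ)]
  {A : Type*} [AddCommGroup A] [Module ℂ A]

/-- The transform `F̃(x,z) = Σ_{ξ∈Ĝ} ξ(z) α_x⁻¹(F(x−z, ξ))` taking `A`-valued functions
on `G × Ĝ` to `A`-valued kernels on `G × G`. -/
noncomputable def dualKernelTransform (α : G → (A ≃ₗ[ℂ] A))
    (F : G → AddChar G ℂˣ → A) : G → G → A :=
  fun x z => ∑ ξ : AddChar G ℂˣ, ((ξ z : ℂˣ) : ℂ) • (α x).symm (F (x - z) ξ)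

/-- The double-dual action `(D_v F)(x,ξ) = ξ(v) F(x,ξ)` of `v ∈ G`. -/
noncomputable def doubleDualAct (v : G) (F : G → AddChar G ℂˣ → A) :
    G → AddChar G ℂˣ → A :=
  fun x ξ => ((ξ v : ℂˣ) : ℂ) • F x ξ

/-- Under the transform, the double dual action of `G` becomes the original action `α`
on `A` combined with the adjoint action of the right regular representation on kernels:
`(D_v F)~(x,z) = α_v( F̃(x+v, z+v) )`. -/
theorem dualKernelTransform_doubleDual (α : G → (A ≃ₗ[ℂ] A))
    (hα : ∀ x y : G, α (x + y) = α x * α y)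
    (F : G → AddChar G ℂˣ → A) (v x z : G) :
    dualKernelTransform α (doubleDualAct v F) x z
      = α v (dualKernelTransform α F (x + v) (z + v)) := by
  simp only [dualKernelTransform, doubleDualAct, map_sum, map_smul]
  refine Finset.sum_congr rfl fun ξ _ => ?_
  have h1 : x + v - (z + v) = x - z := by abel
  have h2 : ∀ a : A, (α v) ((α (x + v)).symm a) = (α x).symm a := by
    intro a
    rw [hα x v]
    refine (α x).injective ?_
    rw [(α x).apply_symm_apply]
    exact (α x * α v).apply_symm_apply a
  rw [h1, h2, AddChar.map_add_eq_mul, Units.val_mul, smul_smul, mul_comm]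
end

section
/- Let G be a multiplicative abelian group, B an associative unital ℂ-algebra, γ : G → Aut_ℂ(B) a map to algebra automorphisms that fix the center of B pointwise, φ : G × G × G → ℂˣ a map, and u₁, u₂ : G × G → Bˣ two families of units each satisfying, for j = 1, 2 and all λ, μ, ν ∈ G and b ∈ B: (i) γ_λ(γ_μ(b)) = u_j(λ,μ) · γ_{λμ}(b) · u_j(λ,μ)⁻¹, and (ii) φ(λ,μ,ν) · u_j(λ,μ) · u_j(λμ,ν) = γ_λ(u_j(μ,ν)) · u_j(λ,μν). Then σ(λ,μ) := u₁(λ,μ) · u₂(λ,μ)⁻¹ takes values in the center of B, and σ is an ordinary (untwisted) 2-cocycle: σ(λ,μ) · σ(λμ,ν) = σ(μ,ν) · σ(λ,μν) for all λ, μ, ν ∈ G. -/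
/-- If two multipliers `u₁, u₂` implement the same twisted action `γ` (fixing the center
of `B` pointwise) with the same associator `φ`, then `σ(λ,μ) = u₁(λ,μ) u₂(λ,μ)⁻¹` is
central and is an ordinary (untwisted) 2-cocycle. -/
theorem multiplier_difference_central_cocycle {G : Type*} [CommGroup G]
    {B : Type*} [Ring B] [Algebra ℂ B]
    (γ : G → (B ≃ₐ[ℂ] B)) (hγc : ∀ g : G, ∀ b ∈ Set.center B, γ g b = b)
    (φ : G → G → G → ℂˣ) (u₁ u₂ : G → G → Bˣ)
    (h₁ad : ∀ (l m : G) (b : B),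
      γ l (γ m b) = (u₁ l m : B) * γ (l * m) b * ((u₁ l m)⁻¹ : Bˣ))
    (h₂ad : ∀ (l m : G) (b : B),
      γ l (γ m b) = (u₂ l m : B) * γ (l * m) b * ((u₂ l m)⁻¹ : Bˣ))
    (h₁coc : ∀ l m n : G, ((φ l m n : ℂˣ) : ℂ) • ((u₁ l m : B) * (u₁ (l * m) n : B))
      = γ l (u₁ m n) * (u₁ l (m * n) : B))
    (h₂coc : ∀ l m n : G, ((φ l m n : ℂˣ) : ℂ) • ((u₂ l m : B) * (u₂ (l * m) n : B))
      = γ l (u₂ m n) * (u₂ l (m * n) : B)) :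
    (∀ l m : G, ((u₁ l m * (u₂ l m)⁻¹ : Bˣ) : B) ∈ Set.center B) ∧
    (∀ l m n : G,
      (u₁ l m * (u₂ l m)⁻¹) * (u₁ (l * m) n * (u₂ (l * m) n)⁻¹)
        = (u₁ m n * (u₂ m n)⁻¹) * (u₁ l (m * n) * (u₂ l (m * n))⁻¹)) := by
  -- commutation: σ(l,m) commutes with everything
  have key : ∀ l m : G, ∀ b : B,
      ((u₁ l m * (u₂ l m)⁻¹ : Bˣ) : B) * b = b * ((u₁ l m * (u₂ l m)⁻¹ : Bˣ) : B) := by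
    intro l m b
    set a : Bˣ := u₁ l m with ha
    set c : Bˣ := u₂ l m with hc
    -- c⁻¹ * a commutes with everything
    have h1 : ∀ x : B, ((c⁻¹ : Bˣ) : B) * (a : B) * x = x * (((c⁻¹ : Bˣ) : B) * (a : B)) := by
      intro x
      have hx := (h₁ad l m ((γ (l * m)).symm x)).symm.trans (h₂ad l m ((γ (l * m)).symm x))
      rw [AlgEquiv.apply_symm_apply] at hx
      rw [← ha, ← hc] at hx
      -- hx : ↑a * x * ↑a⁻¹ = ↑c * x * ↑c⁻¹
      have := congrArg (fun y => ((c⁻¹ : Bˣ) : B) * y * (a : B)) hx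
      simpa [mul_assoc, Units.inv_mul, Units.mul_inv] using this
    have h2 : (a : B) * ((c⁻¹ : Bˣ) : B) = ((c⁻¹ : Bˣ) : B) * (a : B) := by
      have := h1 (c : B)
      -- c⁻¹ * a * c = c * (c⁻¹ * a)  ⇒  c⁻¹ * a * c = a ⇒ ...
      have h3 : ((c⁻¹ : Bˣ) : B) * (a : B) * (c : B) = (a : B) := by
        rw [this, ← mul_assoc, Units.mul_inv, one_mul]
      calc (a : B) * ((c⁻¹ : Bˣ) : B)
          = ((c⁻¹ : Bˣ) : B) * (a : B) * (c : B) * ((c⁻¹ : Bˣ) : B) := by rw [h3]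
        _ = ((c⁻¹ : Bˣ) : B) * (a : B) := by rw [mul_assoc, Units.mul_inv, mul_one]
    calc ((a * c⁻¹ : Bˣ) : B) * b
        = ((c⁻¹ : Bˣ) : B) * (a : B) * b := by rw [Units.val_mul, h2]
      _ = b * (((c⁻¹ : Bˣ) : B) * (a : B)) := h1 b
      _ = b * ((a * c⁻¹ : Bˣ) : B) := by rw [Units.val_mul, h2]
  have hmem : ∀ l m : G, ((u₁ l m * (u₂ l m)⁻¹ : Bˣ) : B) ∈ Set.center B := by
    intro l m
    rw [Semigroup.mem_center_iff]
    intro g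
    exact (key l m g).symm
  refine ⟨hmem, ?_⟩
  intro l m n
  set s1 : B := ((u₁ l m * (u₂ l m)⁻¹ : Bˣ) : B) with hs1
  set s2 : B := ((u₁ (l * m) n * (u₂ (l * m) n)⁻¹ : Bˣ) : B) with hs2
  set s3 : B := ((u₁ m n * (u₂ m n)⁻¹ : Bˣ) : B) with hs3
  set s4 : B := ((u₁ l (m * n) * (u₂ l (m * n))⁻¹ : Bˣ) : B) with hs4
  set X : B := γ l ((u₂ m n : B)) * (u₂ l (m * n) : B) with hX
  have f1 : s1 * (u₂ l m : B) = (u₁ l m : B) := by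
    rw [hs1, Units.val_mul, mul_assoc, Units.inv_mul, mul_one]
  have f2 : s2 * (u₂ (l * m) n : B) = (u₁ (l * m) n : B) := by
    rw [hs2, Units.val_mul, mul_assoc, Units.inv_mul, mul_one]
  have f3 : s3 * (u₂ m n : B) = (u₁ m n : B) := by
    rw [hs3, Units.val_mul, mul_assoc, Units.inv_mul, mul_one]
  have f4 : s4 * (u₂ l (m * n) : B) = (u₁ l (m * n) : B) := by
    rw [hs4, Units.val_mul, mul_assoc, Units.inv_mul, mul_one]
  have hmain : (s1 * s2) * X = (s3 * s4) * X := by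
    calc (s1 * s2) * X
        = (s1 * s2) * (((φ l m n : ℂˣ) : ℂ) • ((u₂ l m : B) * (u₂ (l * m) n : B))) := by
          rw [h₂coc]
      _ = ((φ l m n : ℂˣ) : ℂ) • ((s1 * (u₂ l m : B)) * (s2 * (u₂ (l * m) n : B))) := by
          rw [mul_smul_comm]
          congr 1
          calc s1 * s2 * ((u₂ l m : B) * (u₂ (l * m) n : B))
              = s1 * (s2 * (u₂ l m : B)) * (u₂ (l * m) n : B) := by
                simp [mul_assoc]
            _ = s1 * ((u₂ l m : B) * s2) * (u₂ (l * m) n : B) := by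
                rw [key (l * m) n]
            _ = (s1 * (u₂ l m : B)) * (s2 * (u₂ (l * m) n : B)) := by
                simp [mul_assoc]
      _ = ((φ l m n : ℂˣ) : ℂ) • ((u₁ l m : B) * (u₁ (l * m) n : B)) := by rw [f1, f2]
      _ = γ l ((u₁ m n : B)) * (u₁ l (m * n) : B) := h₁coc l m n
      _ = γ l (s3 * (u₂ m n : B)) * (s4 * (u₂ l (m * n) : B)) := by rw [f3, f4]
      _ = (s3 * γ l ((u₂ m n : B))) * (s4 * (u₂ l (m * n) : B)) := by
          rw [map_mul, hγc l s3 (hmem m n)]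
      _ = s3 * ((γ l ((u₂ m n : B)) * s4) * (u₂ l (m * n) : B)) := by
          simp [mul_assoc]
      _ = s3 * ((s4 * γ l ((u₂ m n : B))) * (u₂ l (m * n) : B)) := by
          rw [key l (m * n)]
      _ = (s3 * s4) * X := by simp [hX, mul_assoc]
  -- cancel X on the right
  have hXc : X * ((((u₂ l (m * n))⁻¹ : Bˣ) : B) * γ l (((u₂ m n)⁻¹ : Bˣ) : B)) = 1 := by
    rw [hX]
    calc γ l ((u₂ m n : B)) * (u₂ l (m * n) : B) *
          ((((u₂ l (m * n))⁻¹ : Bˣ) : B) * γ l (((u₂ m n)⁻¹ : Bˣ) : B))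
        = γ l ((u₂ m n : B)) * ((u₂ l (m * n) : B) * (((u₂ l (m * n))⁻¹ : Bˣ) : B)) *
            γ l (((u₂ m n)⁻¹ : Bˣ) : B) := by simp [mul_assoc]
      _ = γ l ((u₂ m n : B)) * γ l (((u₂ m n)⁻¹ : Bˣ) : B) := by
            rw [Units.mul_inv, mul_one]
      _ = 1 := by rw [← map_mul, Units.mul_inv, map_one]
  have hfin : s1 * s2 = s3 * s4 := by
    set Y : B := (((u₂ l (m * n))⁻¹ : Bˣ) : B) * γ l (((u₂ m n)⁻¹ : Bˣ) : B) with hY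
    calc s1 * s2 = (s1 * s2) * (X * Y) := by rw [hXc, mul_one]
      _ = ((s1 * s2) * X) * Y := (mul_assoc (s1 * s2) X Y).symm
      _ = ((s3 * s4) * X) * Y := by rw [hmain]
      _ = (s3 * s4) * (X * Y) := mul_assoc (s3 * s4) X Y
      _ = s3 * s4 := by rw [hXc, mul_one]
  exact Units.ext (by simpa [Units.val_mul, hs1, hs2, hs3, hs4] using hfin)
end

section
/- On V = Fin 3 → ZMod 2 define u(a,b) = (−1)^{e(a,b)} ∈ ℝ, where e(a,b) ∈ ℕ is the lift (via ZMod.val) of a₀b₁ + a₀b₂ + a₁b₂ + a₀a₁b₂ + a₂a₀b₁ + a₁a₂b₀ ∈ ZMod 2. On the 8-dimensional real vector space of functions f : V → ℝ define the twisted convolution (f ∗ g)(c) = Σ_{a∈V} u(a, c−a) f(a) g(c−a). Then for the standard basis vectors δ_a (the indicator function of a) one has, for all a, b, c ∈ V: (δ_a ∗ δ_b) ∗ δ_c = (−1)^{T(a,b,c).val} • ( δ_a ∗ (δ_b ∗ δ_c) ), where T(a,b,c) = a₀(b₁c₂ + b₂c₁) + a₁(b₂c₀ + b₀c₂) + a₂(b₀c₁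 + b₁c₀) ∈ ZMod 2. -/
/-- The octonionic twisting 2-cochain on `ℤ₂³`:
`u(a,b) = (−1)^{a₀b₁ + a₀b₂ + a₁b₂ + a₀a₁b₂ + a₂a₀b₁ + a₁a₂b₀}`. -/
noncomputable def octCochain (a b : Fin 3 → ZMod 2) : ℝ :=
  (-1 : ℝ) ^ (a 0 * b 1 + a 0 * b 2 + a 1 * b 2
      + a 0 * a 1 * b 2 + a 2 * a 0 * b 1 + a 1 * a 2 * b 0 : ZMod 2).val

/-- The scalar triple product `a · (b × c)` on `ℤ₂³`. -/
def tripleProd (a b c : Fin 3 → ZMod 2) : ZMod 2 :=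
  a 0 * (b 1 * c 2 + b 2 * c 1) + a 1 * (b 2 * c 0 + b 0 * c 2)
    + a 2 * (b 0 * c 1 + b 1 * c 0)

/-- The twisted convolution `(f ∗ g)(c) = Σ_a u(a, c−a) f(a) g(c−a)` on real-valued
functions on `ℤ₂³` (the octonions as a twisted group algebra). -/
noncomputable def octConv (f g : (Fin 3 → ZMod 2) → ℝ) : (Fin 3 → ZMod 2) → ℝ :=
  fun c => ∑ a : Fin 3 → ZMod 2, octCochain a (c - a) * f a * g (c - a)

/-- The standard basis vector `δ_a`, the indicator function of `a`. -/
def octDelta (a : Fin 3 → ZMod 2) : (Fin 3 → ZMod 2) → ℝ :=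
  fun x => if x = a then 1 else 0

lemma neg_one_pow_val_mul (x y : ZMod 2) :
    (-1 : ℝ) ^ x.val * (-1) ^ y.val = (-1) ^ (x + y).val := by
  have h2 : (2 : ZMod 2).val = 0 := rfl
  rw [← pow_add, ZMod.val_add, neg_one_pow_eq_pow_mod_two (R := ℝ) (n := x.val + y.val)]

lemma octConv_delta (a b : Fin 3 → ZMod 2) :
    octConv (octDelta a) (octDelta b) = octCochain a b • octDelta (a + b) := by
  funext x
  simp only [octConv, octDelta, Pi.smul_apply, smul_eq_mul]
  rw [Finset.sum_eq_single a (fun y _ hy => by simp [hy]) (by simp)]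
  have hiff : x - a = b ↔ x = a + b := by
    rw [sub_eq_iff_eq_add']
  by_cases h : x = a + b
  · simp [h, hiff.mpr h]
  · simp [h, hiff.not.mpr h]

lemma octConv_smul_left (r : ℝ) (f g : (Fin 3 → ZMod 2) → ℝ) :
    octConv (r • f) g = r • octConv f g := by
  funext x
  simp only [octConv, Pi.smul_apply, smul_eq_mul, Finset.mul_sum]
  exact Finset.sum_congr rfl (fun i _ => by ring)
lemma octConv_smul_right (r : ℝ) (f g : (Fin 3 → ZMod 2) → ℝ) :
    octConv f (r • g) = r • octConv f g := by
  funext x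
  simp only [octConv, Pi.smul_apply, smul_eq_mul, Finset.mul_sum]
  exact Finset.sum_congr rfl (fun i _ => by ring)

lemma key (a b c : Fin 3 → ZMod 2) :
    (a 0 * b 1 + a 0 * b 2 + a 1 * b 2 + a 0 * a 1 * b 2 + a 2 * a 0 * b 1 + a 1 * a 2 * b 0)
    + ((a+b) 0 * c 1 + (a+b) 0 * c 2 + (a+b) 1 * c 2 + (a+b) 0 * (a+b) 1 * c 2
       + (a+b) 2 * (a+b) 0 * c 1 + (a+b) 1 * (a+b) 2 * c 0)
    = tripleProd a b c
      + (b 0 * c 1 + b 0 * c 2 + b 1 * c 2 + b 0 * b 1 * c 2 + b 2 * b 0 * c 1 + b 1 * b 2 * c 0)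
      + (a 0 * (b+c) 1 + a 0 * (b+c) 2 + a 1 * (b+c) 2 + a 0 * a 1 * (b+c) 2
         + a 2 * a 0 * (b+c) 1 + a 1 * a 2 * (b+c) 0) := by
  simp only [Pi.add_apply, tripleProd]
  revert a b c
  decide

/-- On basis vectors, the twisted convolution algebra of `ℤ₂³` (the octonions) has
associator `(−1)^{a·(b×c)}`:
`(δ_a ∗ δ_b) ∗ δ_c = (−1)^{a·(b×c)} • (δ_a ∗ (δ_b ∗ δ_c))`. -/
theorem octConv_delta_associator (a b c : Fin 3 → ZMod 2) :
    octConv (octConv (octDelta a) (octDelta b)) (octDelta c)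
      = ((-1 : ℝ) ^ (tripleProd a b c).val) •
          octConv (octDelta a) (octConv (octDelta b) (octDelta c)) := by
  rw [octConv_delta, octConv_delta, octConv_smul_left, octConv_smul_right,
    octConv_delta, octConv_delta]
  rw [smul_smul, smul_smul, smul_smul]
  have : a + b + c = a + (b + c) := by abel
  rw [this]
  congr 1
  unfold octCochain
  rw [neg_one_pow_val_mul, neg_one_pow_val_mul, neg_one_pow_val_mul, key]
end
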